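/- Let X be a complete metric space, U a closed process on X, and D a universe in X. Suppose there is a family D̂₀ = {D₀(t) : t ∈ ℝ} of nonempty subsets of X which is pullback D-absorbing for U, and suppose U is pullback D̂₀-asymptotically compact. Then the family {A_D(t)} with A_D(t) = cl(⋃_{D̂∈D} Λ(D̂,t)) pullback D-attracts: for every D̂ ∈ D and every t ∈ ℝ, lim_{τ→−∞} dist(U(t,τ)D(τ), A_D(t)) = 0, where dist denotes the Hausdorff semidistance. -/

import Mathlib

open Filter Topology

/-- The pullback omega-limit set `Λ(D̂,t) = ⋂_{s ≤ t} cl(⋃_{τ ≤ s} U(t,τ)D(τ))`. -/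
def pullbackOmega {X : Type*} [TopologicalSpace X]
    (U : ℝ → ℝ → X → X) (Dh : ℝ → Set X) (t : ℝ) : Set X :=
  ⋂ s ∈ Set.Iic t, closure (⋃ τ ∈ Set.Iic s, U t τ '' Dh τ)

/-- The Hausdorff semidistance `dist(A,B) = sup_{a ∈ A} inf_{b ∈ B} d(a,b)`
(valued in `ℝ≥0∞`). -/
noncomputable def semidist {X : Type*} [MetricSpace X] (A B : Set X) : ENNReal :=
  ⨆ a ∈ A, EMetric.infEdist a B

/-- For a closed process with a pullback `𝒟`-absorbing family `D₀` and pullback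
`D̂₀`-asymptotic compactness, the family `A_𝒟(t) = cl(⋃_{D̂ ∈ 𝒟} Λ(D̂,t))` pullback
`𝒟`-attracts: `dist(U(t,τ)D(τ), A_𝒟(t)) → 0` as `τ → -∞`. -/
theorem pullback_attractor_attracts
    {X : Type*} [MetricSpace X] [CompleteSpace X]
    (U : ℝ → ℝ → X → X)
    (hid : ∀ τ : ℝ, ∀ x : X, U τ τ x = x)
    (hcomp : ∀ ⦃τ s t : ℝ⦄, τ ≤ s → s ≤ t → ∀ x : X, U t s (U s τ x) = U t τ x)
    -- U is a closed process
    (hclosed : ∀ ⦃τ t : ℝ⦄, τ ≤ t → ∀ (xn : ℕ → X) (x y : X),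
      Tendsto xn atTop (𝓝 x) → Tendsto (fun n => U t τ (xn n)) atTop (𝓝 y) →
      y = U t τ x)
    (𝒟 : Set (ℝ → Set X)) (h𝒟ne : 𝒟.Nonempty)
    (h𝒟 : ∀ Dh ∈ 𝒟, ∀ t : ℝ, (Dh t).Nonempty)
    (D₀ : ℝ → Set X) (hD₀ : ∀ t : ℝ, (D₀ t).Nonempty)
    -- D₀ is pullback 𝒟-absorbing
    (habs : ∀ Dh ∈ 𝒟, ∀ t : ℝ, ∃ τ₀ ≤ t, ∀ τ ≤ τ₀, U t τ '' Dh τ ⊆ D₀ t)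
    -- U is pullback D̂₀-asymptotically compact
    (hac : ∀ t : ℝ, ∀ (τn : ℕ → ℝ) (xn : ℕ → X),
      (∀ n, τn n ≤ t) → Tendsto τn atTop atBot → (∀ n, xn n ∈ D₀ (τn n)) →
      IsCompact (closure (Set.range fun n => U t (τn n) (xn n)))) :
    ∀ Dh ∈ 𝒟, ∀ t : ℝ,
      Tendsto (fun τ => semidist (U t τ '' Dh τ)
          (closure (⋃ Eh ∈ 𝒟, pullbackOmega U Eh t)))
        atBot (𝓝 0) := by
  intro Dh hDh t
  by_contra hcon
  rw [ENNReal.tendsto_nhds_zero] at hcon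
  push_neg at hcon
  obtain ⟨ε, hε, hfreq⟩ := hcon
  set A := closure (⋃ Eh ∈ 𝒟, pullbackOmega U Eh t) with hA
  -- select points at far past times with infEdist > ε
  have hsel : ∀ n : ℕ, ∃ τ, τ ≤ min t (-(n:ℝ)) ∧
      ∃ x ∈ Dh τ, ε < EMetric.infEdist (U t τ x) A := by
    intro n
    obtain ⟨τ, hτle, hτ⟩ := frequently_atBot.mp (Filter.not_eventually.mp hfreq) (min t (-(n:ℝ)))
    simp only [not_not] at hτ
    rw [semidist, lt_iSup_iff] at hτ
    obtain ⟨a, ha⟩ := hτ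
    rw [lt_iSup_iff] at ha
    obtain ⟨haS, ha⟩ := ha
    obtain ⟨x, hx, rfl⟩ := haS
    exact ⟨τ, hτle, x, hx, ha⟩
  choose τn hτn xn hxn hεn using hsel
  -- absorbing times at past times s k = t - k
  choose σ hσle hσ using fun k : ℕ => habs Dh hDh (t - k)
  -- pick indices far enough in the past
  have hsel2 : ∀ k : ℕ, ∃ n : ℕ, τn n ≤ σ k ∧ τn n ≤ -(k:ℝ) := by
    intro k
    obtain ⟨n, hn⟩ := exists_nat_ge (max (-(σ k)) (k:ℝ))
    have h1 : τn n ≤ -(n:ℝ) := (hτn n).trans (min_le_right _ _)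
    have h2 : -(σ k) ≤ (n:ℝ) := (le_max_left _ _).trans hn
    have h3 : (k:ℝ) ≤ (n:ℝ) := (le_max_right _ _).trans hn
    exact ⟨n, by linarith, by linarith⟩
  choose nk hnkσ hnkk using hsel2
  set ρ : ℕ → ℝ := fun k => τn (nk k) with hρ
  set z : ℕ → X := fun k => xn (nk k) with hz
  have hρs : ∀ k : ℕ, ρ k ≤ t - k := fun k => (hnkσ k).trans (hσle k)
  have hst : ∀ k : ℕ, t - (k:ℝ) ≤ t := fun k => by
    have : (0:ℝ) ≤ k := Nat.cast_nonneg k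
    linarith
  set y : ℕ → X := fun k => U (t - k) (ρ k) (z k) with hy
  have hyD : ∀ k : ℕ, y k ∈ D₀ (t - k) := fun k =>
    hσ k (ρ k) (hnkσ k) ⟨z k, hxn (nk k), rfl⟩
  have hcompk : ∀ k : ℕ, U t (t - k) (y k) = U t (ρ k) (z k) := fun k =>
    hcomp (hρs k) (hst k) (z k)
  have hstend : Tendsto (fun k : ℕ => t - (k:ℝ)) atTop atBot := by
    apply tendsto_atBot_add_const_left
    exact tendsto_neg_atBot_iff.mpr tendsto_natCast_atTop_atTop
  set w : ℕ → X := fun k => U t (t - k) (y k) with hw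
  have hK : IsCompact (closure (Set.range w)) := hac t (fun k => t - k) y hst hstend hyD
  have hmem : ∀ k : ℕ, w k ∈ closure (Set.range w) :=
    fun k => subset_closure (Set.mem_range_self k)
  obtain ⟨a, -, φ, hφ, htendsto⟩ := hK.tendsto_subseq hmem
  rw [show w ∘ φ = fun k => w (φ k) from rfl] at htendsto
  -- a belongs to the omega-limit set of Dh
  have haΛ : a ∈ pullbackOmega U Dh t := by
    rw [pullbackOmega]
    refine Set.mem_iInter₂.mpr fun s hs => ?_
    refine mem_closure_of_tendsto htendsto ?_
    have hev : ∀ᶠ k : ℕ in atTop, (-s : ℝ) ≤ (k:ℝ) :=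
      tendsto_natCast_atTop_atTop.eventually_ge_atTop (-s)
    filter_upwards [hev] with k hk
    have hρle : ρ (φ k) ≤ s := by
      have h1 : ρ (φ k) ≤ -((φ k : ℕ):ℝ) := hnkk (φ k)
      have h2 : (k:ℝ) ≤ ((φ k : ℕ):ℝ) := by exact_mod_cast hφ.le_apply
      linarith
    show w (φ k) ∈ _
    rw [hw]
    simp only []
    rw [hcompk (φ k)]
    exact Set.mem_biUnion hρle ⟨z (φ k), hxn (nk (φ k)), rfl⟩
  have haA : a ∈ A := subset_closure (Set.mem_biUnion hDh haΛ)
  have hdist0 : EMetric.infEdist a A = 0 :=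
    EMetric.infEdist_zero_of_mem haA
  have hcont : Tendsto (fun k => EMetric.infEdist (w (φ k)) A)
      atTop (𝓝 0) := by
    rw [← hdist0]
    exact (EMetric.continuous_infEdist.tendsto a).comp htendsto
  have hge : ∀ k : ℕ, ε ≤ EMetric.infEdist (w (φ k)) A := by
    intro k
    show ε ≤ EMetric.infEdist (U t (t - (φ k)) (y (φ k))) A
    rw [hcompk (φ k)]
    exact (hεn (nk (φ k))).le
  have : ε ≤ 0 := ge_of_tendsto hcont (Eventually.of_forall hge)
  exact absurd this (by simpa using hε.ne')
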